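/- arXiv:1806.10406 — 2 statements merged into one kernel-verified Lean document; each statement's English description precedes it below -/
import Mathlib

section
/- Fix an integer m ≥ 1 and a real δ > −m. Let ψ₂, ψ₃, … be independent random variables with ψ_k distributed as Beta(m+δ, m(2k−3)+(k−1)δ). Then for every ε > 0 there exists ω = ω(ε) ∈ (0,1) such that for every integer t ≥ 2: P( max_{i∈{2,…,t}} ψ_i < ω ) ≥ 1 − ε. -/
open Real MeasureTheory ProbabilityTheory Finset

/-- The Beta(a,b) distribution: the measure on ℝ supported on (0,1) with density
`x^(a-1) (1-x)^(b-1) / B(a,b)` where `B(a,b) = Γ(a)Γ(b)/Γ(a+b)`. -/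
noncomputable def betaMeasure (a b : ℝ) : Measure ℝ :=
  MeasureTheory.volume.withDensity
    (Set.indicator (Set.Ioo 0 1) fun x =>
      ENNReal.ofReal (x ^ (a - 1) * (1 - x) ^ (b - 1) /
        (Real.Gamma a * Real.Gamma b / Real.Gamma (a + b))))

open Filter
open scoped ENNReal


lemma beta_ptwise {a b x : ℝ} (hx : x ∈ Set.Ioo (0:ℝ) 1) :
    ((x : ℂ) ^ ((a : ℂ) - 1) * (1 - (x : ℂ)) ^ ((b : ℂ) - 1)) =
      ((x ^ (a - 1) * (1 - x) ^ (b - 1) : ℝ) : ℂ) := by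
  have h1 : ((x ^ (a-1) : ℝ) : ℂ) = (x : ℂ) ^ ((a:ℂ) - 1) := by
    rw [Complex.ofReal_cpow hx.1.le]; push_cast; ring_nf
  have h2 : (((1-x) ^ (b-1) : ℝ) : ℂ) = (1 - (x : ℂ)) ^ ((b:ℂ) - 1) := by
    rw [Complex.ofReal_cpow (by linarith [hx.2] : (0:ℝ) ≤ 1 - x)]; push_cast; ring_nf
  rw [Complex.ofReal_mul, h1, h2]

lemma integrableOn_beta {a b : ℝ} (ha : 0 < a) (hb : 0 < b) :
    MeasureTheory.IntegrableOn (fun x : ℝ => x ^ (a-1) * (1-x) ^ (b-1)) (Set.Ioo 0 1) := by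
  have h := Complex.betaIntegral_convergent (u := (a:ℂ)) (v := (b:ℂ)) (by simpa) (by simpa)
  have h2 : MeasureTheory.IntegrableOn
      (fun x : ℝ => (x : ℂ) ^ ((a:ℂ)-1) * (1 - (x:ℂ)) ^ ((b:ℂ)-1)) (Set.Ioc 0 1) := by
    simpa [intervalIntegrable_iff_integrableOn_Ioc_of_le] using h
  have h3 := h2.mono_set Set.Ioo_subset_Ioc_self
  have h4 : MeasureTheory.IntegrableOn
      (fun x : ℝ => ((x ^ (a-1) * (1-x) ^ (b-1) : ℝ) : ℂ)) (Set.Ioo 0 1) :=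
    h3.congr_fun (fun x hx => (beta_ptwise hx)) measurableSet_Ioo
  have h5 := h4.re
  simpa [MeasureTheory.IntegrableOn] using h5

lemma integral_beta {a b : ℝ} (ha : 0 < a) (hb : 0 < b) :
    ∫ x in Set.Ioo (0:ℝ) 1, x ^ (a-1) * (1-x) ^ (b-1) =
      Real.Gamma a * Real.Gamma b / Real.Gamma (a+b) := by
  have key : Complex.Gamma a * Complex.Gamma b
      = Complex.Gamma ((a:ℂ)+b) * Complex.betaIntegral a b :=
    Complex.Gamma_mul_Gamma_eq_betaIntegral (by simpa) (by simpa)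
  have hB : Complex.betaIntegral a b
      = ((∫ x in Set.Ioo (0:ℝ) 1, x ^ (a-1) * (1-x) ^ (b-1) : ℝ) : ℂ) := by
    rw [Complex.betaIntegral, intervalIntegral.integral_of_le one_pos.le,
      MeasureTheory.integral_Ioc_eq_integral_Ioo,
      MeasureTheory.setIntegral_congr_fun measurableSet_Ioo (g := fun x : ℝ =>
        ((x ^ (a-1) * (1-x) ^ (b-1) : ℝ) : ℂ)) (fun x hx => beta_ptwise hx)]
    exact integral_ofReal
  have hG : (0:ℝ) < Real.Gamma (a+b) := Real.Gamma_pos_of_pos (by linarith)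
  have : ((Real.Gamma a * Real.Gamma b : ℝ) : ℂ)
      = ((Real.Gamma (a+b) * ∫ x in Set.Ioo (0:ℝ) 1, x ^ (a-1) * (1-x) ^ (b-1) : ℝ) : ℂ) := by
    push_cast [← Complex.Gamma_ofReal]
    rw [key, hB]
  have h2 := Complex.ofReal_injective this
  rw [eq_div_iff hG.ne']
  linarith [h2]

lemma beta_tail_moment {a b ω : ℝ} (ha : 0 < a) (hb : 0 < b) (hω : 0 < ω) :
    _root_.betaMeasure a b (Set.Ici ω) ≤
      ENNReal.ofReal (a * (a+1) / ((a+b) * (a+b+1) * ω^2)) := by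
  have hGa := Real.Gamma_pos_of_pos ha
  have hGb := Real.Gamma_pos_of_pos hb
  have hGab := Real.Gamma_pos_of_pos (by linarith : (0:ℝ) < a + b)
  set B : ℝ := Real.Gamma a * Real.Gamma b / Real.Gamma (a+b) with hBdef
  have hB : 0 < B := by positivity
  rw [_root_.betaMeasure, withDensity_apply _ measurableSet_Ici,
    setLIntegral_indicator measurableSet_Ioo]
  have step1 : ∫⁻ x in Set.Ioo 0 1 ∩ Set.Ici ω,
      ENNReal.ofReal (x ^ (a-1) * (1-x) ^ (b-1) / B) ≤
      ∫⁻ x in Set.Ioo (0:ℝ) 1,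
      ENNReal.ofReal (x ^ (a+1) * (1-x) ^ (b-1) / (B * ω^2)) := by
    refine le_trans (setLIntegral_mono' (measurableSet_Ioo.inter measurableSet_Ici) ?_)
      (lintegral_mono_set Set.inter_subset_left)
    rintro x ⟨hx, hxω⟩
    apply ENNReal.ofReal_le_ofReal
    have hx0 : (0:ℝ) < x := hx.1
    have hx1 : x < 1 := hx.2
    have hxge : ω ≤ x := hxω
    have key : x ^ (a-1) * ω^2 ≤ x ^ (a+1) := by
      have : x ^ (a+1) = x ^ (a-1) * x ^ (2:ℝ) := by
        rw [← Real.rpow_add hx0]; ring_nf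
      rw [this, Real.rpow_two]
      have : ω^2 ≤ x^2 := by
        apply pow_le_pow_left₀ hω.le hxge
      nlinarith [Real.rpow_nonneg hx0.le (a-1)]
    rw [div_le_div_iff₀ hB (by positivity)]
    have h1x : (0:ℝ) ≤ (1-x) ^ (b-1) := Real.rpow_nonneg (by linarith) _
    nlinarith [mul_le_mul_of_nonneg_left key h1x]
  refine le_trans step1 ?_
  have hint : MeasureTheory.IntegrableOn
      (fun x : ℝ => x ^ (a+1) * (1-x) ^ (b-1) / (B * ω^2)) (Set.Ioo 0 1) := by
    have := (integrableOn_beta (a := a+2) (b := b) (by linarith) hb).div_const (B * ω^2)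
    simpa [show a + 2 - 1 = a + 1 by ring, MeasureTheory.IntegrableOn] using this
  rw [← MeasureTheory.ofReal_integral_eq_lintegral_ofReal hint ?nn]
  case nn =>
    filter_upwards [ae_restrict_mem measurableSet_Ioo] with x hx
    have h1 : (0:ℝ) ≤ x := hx.1.le
    have h2 : (0:ℝ) ≤ 1 - x := by linarith [hx.2]
    positivity
  apply ENNReal.ofReal_le_ofReal
  rw [MeasureTheory.integral_div]
  have hval : ∫ x in Set.Ioo (0:ℝ) 1, x ^ (a+1) * (1-x) ^ (b-1) =
      Real.Gamma (a+2) * Real.Gamma b / Real.Gamma (a+2+b) := by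
    have := integral_beta (a := a+2) (b := b) (by linarith) hb
    simpa [show a + 2 - 1 = a + 1 by ring] using this
  rw [hval]
  have g1 : Real.Gamma (a+2) = (a+1) * (a * Real.Gamma a) := by
    rw [show a+2 = (a+1)+1 by ring, Real.Gamma_add_one (by positivity),
      Real.Gamma_add_one ha.ne']
  have g2 : Real.Gamma (a+2+b) = (a+b+1) * ((a+b) * Real.Gamma (a+b)) := by
    rw [show a+2+b = (a+b+1)+1 by ring, Real.Gamma_add_one (by positivity),
      show a+b+1 = (a+b)+1 by ring, Real.Gamma_add_one (by positivity)]
  apply le_of_eq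
  rw [g1, g2, hBdef]
  field_simp

lemma beta_tail_near_one {a b ω : ℝ} (ha : 0 < a) (hb : 0 < b)
    (hω2 : 1/2 ≤ ω) (hω1 : ω < 1) :
    _root_.betaMeasure a b (Set.Ici ω) ≤
      ENNReal.ofReal (max 1 (2 ^ (1-a)) * ((1-ω) ^ b / b) /
        (Real.Gamma a * Real.Gamma b / Real.Gamma (a + b))) := by
  have hGa := Real.Gamma_pos_of_pos ha
  have hGb := Real.Gamma_pos_of_pos hb
  have hGab := Real.Gamma_pos_of_pos (by linarith : (0:ℝ) < a + b)
  set B : ℝ := Real.Gamma a * Real.Gamma b / Real.Gamma (a+b) with hBdef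
  have hB : 0 < B := by positivity
  set M : ℝ := max 1 (2 ^ (1-a)) with hMdef
  have hM : 0 < M := lt_of_lt_of_le one_pos (le_max_left _ _)
  rw [_root_.betaMeasure, withDensity_apply _ measurableSet_Ici,
    setLIntegral_indicator measurableSet_Ioo]
  have hset : Set.Ioo (0:ℝ) 1 ∩ Set.Ici ω = Set.Ico ω 1 := by
    ext x
    simp only [Set.mem_inter_iff, Set.mem_Ioo, Set.mem_Ici, Set.mem_Ico]
    constructor
    · rintro ⟨⟨_, h2⟩, h3⟩; exact ⟨h3, h2⟩
    · rintro ⟨h1, h2⟩; exact ⟨⟨by linarith, h2⟩, h1⟩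
  rw [hset]
  have step1 : ∫⁻ x in Set.Ico ω 1,
      ENNReal.ofReal (x ^ (a-1) * (1-x) ^ (b-1) / B) ≤
      ∫⁻ x in Set.Ico ω 1, ENNReal.ofReal (M * (1-x) ^ (b-1) / B) := by
    refine setLIntegral_mono' measurableSet_Ico ?_
    rintro x ⟨hx1, hx2⟩
    apply ENNReal.ofReal_le_ofReal
    have hxpow : x ^ (a-1) ≤ M := by
      rcases le_or_gt 1 a with h | h
      · exact le_trans (Real.rpow_le_one (by linarith) hx2.le (by linarith))
          (le_max_left _ _)
      · refine le_trans ?_ (le_max_right _ _)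
        have h1 : ((1:ℝ)/2) ^ (a-1) = 2 ^ (1-a) := by
          rw [one_div, Real.inv_rpow (by norm_num), ← Real.rpow_neg (by norm_num),
            show -(a-1) = 1-a by ring]
        rw [← h1]
        exact Real.rpow_le_rpow_of_nonpos (by norm_num) (by linarith) (by linarith)
    have h1x : (0:ℝ) ≤ (1-x) ^ (b-1) := Real.rpow_nonneg (by linarith) _
    gcongr
  refine le_trans step1 ?_
  have hii : IntervalIntegrable (fun x : ℝ => (1-x) ^ (b-1)) volume ω 1 := by
    have := (intervalIntegral.intervalIntegrable_rpow' (r := b-1)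
      (by linarith) (a := 0) (b := 1-ω)).comp_sub_left 1
    simpa using this.symm
  have hint : MeasureTheory.IntegrableOn
      (fun x : ℝ => M * (1-x) ^ (b-1) / B) (Set.Ico ω 1) := by
    have h1 : MeasureTheory.IntegrableOn
        (fun x : ℝ => (1-x) ^ (b-1)) (Set.Ioc ω 1) :=
      (intervalIntegrable_iff_integrableOn_Ioc_of_le hω1.le).mp hii
    have h2 : MeasureTheory.IntegrableOn
        (fun x : ℝ => (1-x) ^ (b-1)) (Set.Ico ω 1) := by
      rw [integrableOn_Ico_iff_integrableOn_Ioo]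
      exact h1.mono_set Set.Ioo_subset_Ioc_self
    exact (h2.const_mul M).div_const B
  rw [← MeasureTheory.ofReal_integral_eq_lintegral_ofReal hint ?nn]
  case nn =>
    filter_upwards [ae_restrict_mem measurableSet_Ico] with x hx
    have h2 : (0:ℝ) ≤ 1 - x := by linarith [hx.2]
    positivity
  apply ENNReal.ofReal_le_ofReal
  apply le_of_eq
  rw [MeasureTheory.integral_div, MeasureTheory.integral_const_mul]
  congr 2
  rw [MeasureTheory.integral_Ico_eq_integral_Ioo, ← MeasureTheory.integral_Ioc_eq_integral_Ioo,
    ← intervalIntegral.integral_of_le hω1.le]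
  have : (∫ x in ω..1, (1-x) ^ (b-1)) = ∫ x in (0:ℝ)..(1-ω), x ^ (b-1) := by
    have := intervalIntegral.integral_comp_sub_left (a := ω) (b := 1)
      (fun u : ℝ => u ^ (b-1)) 1
    simpa using this
  rw [this, integral_rpow (Or.inl (by linarith))]
  rw [Real.zero_rpow (by linarith : b - 1 + 1 ≠ 0), show b-1+1 = b by ring]
  ring

lemma beta_tail_tendsto {a b : ℝ} (ha : 0 < a) (hb : 0 < b) :
    Tendsto (fun ω => _root_.betaMeasure a b (Set.Ici ω)) (nhdsWithin 1 (Set.Iio 1)) (nhds 0) := by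
  have hGa := Real.Gamma_pos_of_pos ha
  have hGb := Real.Gamma_pos_of_pos hb
  have hGab := Real.Gamma_pos_of_pos (by linarith : (0:ℝ) < a + b)
  set B : ℝ := Real.Gamma a * Real.Gamma b / Real.Gamma (a+b) with hBdef
  have hB : 0 < B := by positivity
  set M : ℝ := max 1 (2 ^ (1-a)) with hMdef
  have hreal : Tendsto (fun ω : ℝ => M * ((1-ω) ^ b / b) / B)
      (nhdsWithin 1 (Set.Iio 1)) (nhds 0) := by
    have h1 : Tendsto (fun ω : ℝ => 1 - ω) (nhdsWithin 1 (Set.Iio 1)) (nhds 0) := by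
      have : Tendsto (fun ω : ℝ => 1 - ω) (nhds 1) (nhds 0) := by
        have h := ((continuous_const (y := (1:ℝ))).sub continuous_id).tendsto (1:ℝ)
        simpa only [Pi.sub_def, id_eq, sub_self] using h
      exact this.mono_left nhdsWithin_le_nhds
    have h2 : Tendsto (fun ω : ℝ => (1-ω) ^ b) (nhdsWithin 1 (Set.Iio 1)) (nhds 0) := by
      have hc : ContinuousAt (fun z : ℝ => z ^ b) 0 :=
        Real.continuousAt_rpow_const 0 b (Or.inr hb.le)
      have := hc.tendsto.comp h1
      simpa [Real.zero_rpow hb.ne', Function.comp_def] using this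
    have := ((h2.div_const b).const_mul M).div_const B
    simpa using this
  have henn : Tendsto (fun ω : ℝ => ENNReal.ofReal (M * ((1-ω) ^ b / b) / B))
      (nhdsWithin 1 (Set.Iio 1)) (nhds 0) := by
    have := (ENNReal.continuous_ofReal.tendsto 0).comp hreal
    simpa [Function.comp_def] using this
  refine tendsto_of_tendsto_of_tendsto_of_le_of_le' tendsto_const_nhds henn ?_ ?_
  · filter_upwards with ω using zero_le
  · filter_upwards [eventually_nhdsWithin_of_eventually_nhds
      (eventually_ge_nhds (by norm_num : (1:ℝ)/2 < 1)),
      self_mem_nhdsWithin] with ω h1 h2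
    exact beta_tail_near_one ha hb h1 h2


lemma telescope_aux {N : ℕ} (hN : 1 ≤ N) (t : ℕ) :
    ∑ k ∈ Finset.Ioc N t, (1:ℝ)/(((k:ℝ)-1)*k) ≤ 1/N - 1/(max N t) := by
  induction t with
  | zero =>
    rw [Finset.Ioc_eq_empty (by omega)]
    simp [Nat.max_eq_left (Nat.zero_le N)]
  | succ t ih =>
    rcases le_or_gt (t+1) N with h | h
    · rw [Finset.Ioc_eq_empty (by omega)]
      simp [Nat.max_eq_left (by omega : t + 1 ≤ N)]
    · have hNt : N ≤ t := by omega
      have ht1 : (1:ℝ) ≤ t := by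
        have : 1 ≤ t := le_trans hN hNt
        exact_mod_cast this
      rw [Finset.sum_Ioc_succ_top hNt, Nat.max_eq_right (by omega : N ≤ t + 1)]
      have hmax : max N t = t := Nat.max_eq_right hNt
      rw [hmax] at ih
      push_cast
      push_cast at ih
      have e : (1:ℝ)/(((t:ℝ)+1-1)*((t:ℝ)+1)) = 1/(t:ℝ) - 1/((t:ℝ)+1) := by
        rw [show ((t:ℝ)+1)-1 = t by ring]
        field_simp
        ring
      rw [e]
      linarith

lemma telescope {N : ℕ} (hN : 1 ≤ N) (t : ℕ) :
    ∑ k ∈ Finset.Ioc N t, (1:ℝ)/(((k:ℝ)-1)*k) ≤ 1/N := by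
  have h := telescope_aux hN t
  have h2 : (0:ℝ) ≤ 1/(max N t) := by positivity
  linarith


lemma arith {a X i ω : ℝ} (ha : 0 < a) (hi : 2 ≤ i) (hX : i*a ≤ X)
    (hω2 : 1/4 ≤ ω^2) :
    a*(a+1)/(X*(X+1)*ω^2) ≤ (4*(a+1)/a) * (1/((i-1)*i)) := by
  have hXpos : (0:ℝ) < X := lt_of_lt_of_le (by nlinarith) hX
  rw [div_mul_div_comm, mul_one]
  have hii : (0:ℝ) < (i-1)*i := by nlinarith
  rw [div_le_div_iff₀ (by positivity) (by positivity : (0:ℝ) < a*((i-1)*i))]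
  have hia : 0 < i*a := by nlinarith
  have h1 : (i*a) * (i*a) ≤ X*(X+1) := by nlinarith [mul_le_mul hX hX hia.le hXpos.le]
  have e1 : a*(a+1)*(a*((i-1)*i)) ≤ (a+1)*((i*a)*(i*a)) := by nlinarith
  have e2 : (a+1)*((i*a)*(i*a)) ≤ (a+1)*(X*(X+1)) := by nlinarith
  have hP : (0:ℝ) ≤ (a+1)*(X*(X+1)) := by positivity
  have e3 : (a+1)*(X*(X+1)) ≤ 4*(a+1)*(X*(X+1)*ω^2) := by nlinarith [mul_le_mul_of_nonneg_left hω2 hP]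
  linarith

theorem maximum_intensity {Ω : Type*} [MeasurableSpace Ω]
    (P : Measure Ω) [IsProbabilityMeasure P]
    (m : ℕ) (hm : 1 ≤ m) (δ : ℝ) (hδ : -(m : ℝ) < δ)
    (ψ : ℕ → Ω → ℝ) (hmeas : ∀ k, Measurable (ψ k))
    (hindep : ProbabilityTheory.iIndepFun (fun k : ℕ => ψ (k + 2)) P)
    (hdist : ∀ k : ℕ, 2 ≤ k →
      Measure.map (ψ k) P =
        _root_.betaMeasure ((m : ℝ) + δ) ((m : ℝ) * (2 * (k : ℝ) - 3) + ((k : ℝ) - 1) * δ)) :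
    ∀ ε : ℝ, 0 < ε → ∃ ω : ℝ, ω ∈ Set.Ioo (0 : ℝ) 1 ∧ ∀ t : ℕ, 2 ≤ t →
      ENNReal.ofReal (1 - ε) ≤ P {a | ∀ i ∈ Finset.Icc 2 t, ψ i a < ω} := by
  intro ε hε
  rcases le_or_gt 1 ε with hε1 | hε1
  · exact ⟨1/2, by norm_num, fun t ht => by
      rw [ENNReal.ofReal_eq_zero.mpr (by linarith)]; exact zero_le⟩
  set a : ℝ := (m:ℝ) + δ with hadef
  have hm1 : (1:ℝ) ≤ m := by exact_mod_cast hm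
  have ha : 0 < a := by rw [hadef]; linarith
  set b : ℕ → ℝ := fun k => (m:ℝ) * (2*(k:ℝ) - 3) + ((k:ℝ)-1) * δ with hbdef
  have hbpos : ∀ k : ℕ, 2 ≤ k → 0 < b k := by
    intro k hk
    have hk2 : (2:ℝ) ≤ k := by exact_mod_cast hk
    simp only [hbdef]
    nlinarith
  have hab : ∀ k : ℕ, 2 ≤ k → (k:ℝ) * a ≤ a + b k := by
    intro k hk
    have hk2 : (2:ℝ) ≤ k := by exact_mod_cast hk
    simp only [hadef, hbdef]
    nlinarith
  -- choose N
  obtain ⟨N0, hN0⟩ := exists_nat_gt (8*(a+1)/(a*ε))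
  set N : ℕ := max N0 2 with hNdef
  have hN2 : 2 ≤ N := le_max_right _ _
  have hNR : (2:ℝ) ≤ N := by exact_mod_cast hN2
  have hNpos : (0:ℝ) < N := by linarith
  have hNbig : 8*(a+1)/(a*ε) ≤ N := by
    refine le_trans hN0.le ?_
    exact_mod_cast le_max_left N0 2
  have hNkey : 4*(a+1)/(a*(N:ℝ)) ≤ ε/2 := by
    rw [div_le_div_iff₀ (by positivity) (by norm_num)]
    rw [div_le_iff₀ (by positivity)] at hNbig
    nlinarith
  -- choose ω
  have hfilter : ∀ᶠ ω in nhdsWithin (1:ℝ) (Set.Iio 1),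
      ((0 < ω ∧ 1/2 ≤ ω) ∧ ω ∈ Set.Iio (1:ℝ)) ∧ ∀ k ∈ Finset.Icc 2 N,
        _root_.betaMeasure a (b k) (Set.Ici ω) ≤ ENNReal.ofReal (ε/(2*N)) := by
    refine Filter.Eventually.and (Filter.Eventually.and ?_ eventually_mem_nhdsWithin) ?_
    · refine eventually_nhdsWithin_of_eventually_nhds ?_
      filter_upwards [eventually_gt_nhds (by norm_num : (0:ℝ) < 1),
        eventually_ge_nhds (by norm_num : (1:ℝ)/2 < 1)] with ω h1 h2
      exact ⟨h1, h2⟩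
    · refine ((Finset.Icc 2 N).finite_toSet.eventually_all).mpr ?_
      intro k hk
      simp only [Finset.coe_Icc, Set.mem_Icc] at hk
      have htd := beta_tail_tendsto ha (hbpos k hk.1)
      have hpos : (0:ℝ≥0∞) < ENNReal.ofReal (ε/(2*N)) :=
        ENNReal.ofReal_pos.mpr (by positivity)
      filter_upwards [htd.eventually_lt_const hpos] with ω hω
      exact hω.le
  obtain ⟨ω, ⟨⟨hω0, hωhalf⟩, hω1⟩, hsmall⟩ := hfilter.exists
  rw [Set.mem_Iio] at hω1
  refine ⟨ω, ⟨hω0, hω1⟩, ?_⟩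
  intro t ht
  -- measurability of the event
  set E : Set Ω := {x | ∀ i ∈ Finset.Icc 2 t, ψ i x < ω} with hEdef
  have hEset : E = ⋂ i ∈ Finset.Icc 2 t, (ψ i)⁻¹' (Set.Iio ω) := by
    ext x; simp [hEdef]
  have hEmeas : MeasurableSet E := by
    rw [hEset]
    exact MeasurableSet.biInter (Set.to_countable _)
      (fun i _ => hmeas i measurableSet_Iio)
  have hcompl : Eᶜ = ⋃ i ∈ Finset.Icc 2 t, (ψ i)⁻¹' (Set.Ici ω) := by
    ext x; simp [hEdef, not_lt]; tauto
  -- tail bound per coordinate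
  have hmap : ∀ i ∈ Finset.Icc 2 t,
      P ((ψ i)⁻¹' (Set.Ici ω)) = _root_.betaMeasure a (b i) (Set.Ici ω) := by
    intro i hi
    rw [← Measure.map_apply (hmeas i) measurableSet_Ici,
      hdist i (Finset.mem_Icc.mp hi).1]
  have hPcompl : P Eᶜ ≤ ENNReal.ofReal ε := by
    have h1 : P Eᶜ ≤ ∑ i ∈ Finset.Icc 2 t, _root_.betaMeasure a (b i) (Set.Ici ω) := by
      rw [hcompl]
      refine le_trans (measure_biUnion_finset_le _ _) ?_
      exact le_of_eq (Finset.sum_congr rfl hmap)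
    have hsub : Finset.Icc 2 t ⊆ Finset.Icc 2 N ∪ Finset.Ioc N t := by
      intro i hi
      simp only [Finset.mem_Icc, Finset.mem_union, Finset.mem_Ioc] at *
      omega
    have hdisj : Disjoint (Finset.Icc 2 N) (Finset.Ioc N t) := by
      rw [Finset.disjoint_left]
      intro i hi hi2
      simp only [Finset.mem_Icc, Finset.mem_Ioc] at *
      omega
    have h2 : ∑ i ∈ Finset.Icc 2 t, _root_.betaMeasure a (b i) (Set.Ici ω) ≤
        (∑ i ∈ Finset.Icc 2 N, _root_.betaMeasure a (b i) (Set.Ici ω)) +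
        ∑ i ∈ Finset.Ioc N t, _root_.betaMeasure a (b i) (Set.Ici ω) := by
      rw [← Finset.sum_union hdisj]
      exact Finset.sum_le_sum_of_subset hsub
    -- part A
    have hA : ∑ i ∈ Finset.Icc 2 N, _root_.betaMeasure a (b i) (Set.Ici ω) ≤
        ENNReal.ofReal (ε/2) := by
      refine le_trans (Finset.sum_le_sum hsmall) ?_
      rw [Finset.sum_const, nsmul_eq_mul]
      have hcard : ((Finset.Icc 2 N).card : ℝ≥0∞) ≤ (N : ℝ≥0∞) := by
        exact_mod_cast le_trans (le_of_eq (Nat.card_Icc 2 N)) (by omega)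
      refine le_trans (mul_le_mul_left hcard _) ?_
      rw [← ENNReal.ofReal_natCast N, ← ENNReal.ofReal_mul (by positivity)]
      apply ENNReal.ofReal_le_ofReal
      apply le_of_eq
      field_simp
    -- part B
    have hB : ∑ i ∈ Finset.Ioc N t, _root_.betaMeasure a (b i) (Set.Ici ω) ≤
        ENNReal.ofReal (ε/2) := by
      have hterm : ∀ i ∈ Finset.Ioc N t, _root_.betaMeasure a (b i) (Set.Ici ω) ≤
          ENNReal.ofReal ((4*(a+1)/a) * ((1:ℝ)/(((i:ℝ)-1)*i))) := by
        intro i hi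
        simp only [Finset.mem_Ioc] at hi
        have hi2 : 2 ≤ i := by omega
        have hiR : (2:ℝ) ≤ i := by exact_mod_cast hi2
        refine le_trans (beta_tail_moment ha (hbpos i hi2) hω0) ?_
        apply ENNReal.ofReal_le_ofReal
        have hω2 : (1:ℝ)/4 ≤ ω^2 := by nlinarith
        exact arith ha hiR (hab i hi2) hω2
      refine le_trans (Finset.sum_le_sum hterm) ?_
      rw [← ENNReal.ofReal_sum_of_nonneg (fun i hi => by
        have hmem := Finset.mem_Ioc.mp hi
        have hiR : (2:ℝ) ≤ (i:ℝ) := by exact_mod_cast (by omega : 2 ≤ i)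
        have h3 : (0:ℝ) ≤ ((i:ℝ)-1)*i := by nlinarith
        exact mul_nonneg (by positivity) (one_div_nonneg.mpr h3))]
      apply ENNReal.ofReal_le_ofReal
      rw [← Finset.mul_sum]
      have htel := telescope (by omega : 1 ≤ N) t
      have hfrac : 4*(a+1)/a * ((1:ℝ)/N) = 4*(a+1)/(a*N) := by
        field_simp
      calc 4*(a+1)/a * ∑ i ∈ Finset.Ioc N t, (1:ℝ)/(((i:ℝ)-1)*i)
          ≤ 4*(a+1)/a * ((1:ℝ)/N) := by
            apply mul_le_mul_of_nonneg_left htel (by positivity)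
        _ = 4*(a+1)/(a*N) := hfrac
        _ ≤ ε/2 := hNkey
    calc P Eᶜ ≤ _ := h1
      _ ≤ _ := h2
      _ ≤ ENNReal.ofReal (ε/2) + ENNReal.ofReal (ε/2) := add_le_add hA hB
      _ = ENNReal.ofReal ε := by
          rw [← ENNReal.ofReal_add (by positivity) (by positivity)]
          norm_num
  -- conclude
  have hPE : P E = 1 - P Eᶜ := by
    rw [measure_compl hEmeas (measure_ne_top _ _), measure_univ]
    rw [ENNReal.sub_sub_cancel ENNReal.one_ne_top prob_le_one]
  rw [hPE, ENNReal.ofReal_sub 1 hε.le]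
  simp only [ENNReal.ofReal_one]
  exact tsub_le_tsub_left hPcompl 1
end

section
/- Fix an integer m ≥ 1 and a real δ > −m. Let ψ₂, ψ₃, … be independent random variables with ψ_k distributed as Beta(m+δ, m(2k−3)+(k−1)δ). Then for every ε > 0 there exists K = K(ε) ∈ ℕ such that P( for all k ≥ K: ψ_k ≤ (log k)² / ((2m+δ) k) ) ≥ 1 − ε. -/
open Real MeasureTheory ProbabilityTheory Finset

lemma betaIdent {a b : ℝ} (ha : 0 < a) (hb : 0 < b) :
    Real.Gamma a * Real.Gamma b =
      Real.Gamma (a + b) * ∫ x in (0:ℝ)..1, x ^ (a-1) * (1-x) ^ (b-1) := by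
  have h := Complex.Gamma_mul_Gamma_eq_betaIntegral (s := (a:ℂ)) (t := (b:ℂ))
    (by simpa using ha) (by simpa using hb)
  have hbeta : Complex.betaIntegral a b =
      ((∫ x in (0:ℝ)..1, x ^ (a-1) * (1-x) ^ (b-1) : ℝ) : ℂ) := by
    rw [Complex.betaIntegral, ← intervalIntegral.integral_ofReal]
    apply intervalIntegral.integral_congr
    intro x hx
    rw [Set.uIcc_of_le (zero_le_one' ℝ), Set.mem_Icc] at hx
    have hx0 : (0:ℝ) ≤ x := hx.1
    have hx1 : (0:ℝ) ≤ 1 - x := by linarith [hx.2]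
    push_cast
    rw [Complex.ofReal_cpow hx0, Complex.ofReal_cpow hx1]
    push_cast
    ring
  rw [hbeta, ← Complex.ofReal_add] at h
  rw [Complex.Gamma_ofReal, Complex.Gamma_ofReal, Complex.Gamma_ofReal] at h
  exact_mod_cast h

lemma rpow_int_Ioo {a s : ℝ} (ha : 0 < a) (hs : 0 < s) :
    ∫ x in Set.Ioo (0:ℝ) s, x ^ (a-1) = s ^ a / a := by
  rw [← integral_Ioc_eq_integral_Ioo, ← intervalIntegral.integral_of_le hs.le,
    integral_rpow (Or.inl (by linarith))]
  rw [Real.zero_rpow (by linarith : a - 1 + 1 ≠ 0)]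
  ring_nf

lemma betaInteg {a b : ℝ} (ha : 0 < a) (hb : 0 < b) :
    IntegrableOn (fun x : ℝ => x ^ (a-1) * (1-x) ^ (b-1)) (Set.Ioo 0 1) := by
  have hF : IntervalIntegrable
      (fun x : ℝ => (x:ℂ) ^ ((a:ℂ)-1) * (1 - (x:ℂ)) ^ ((b:ℂ)-1)) volume 0 1 :=
    Complex.betaIntegral_convergent (by simpa using ha) (by simpa using hb)
  have h1 : IntegrableOn
      (fun x : ℝ => (x:ℂ) ^ ((a:ℂ)-1) * (1 - (x:ℂ)) ^ ((b:ℂ)-1)) (Set.Ioc 0 1) :=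
    (intervalIntegrable_iff_integrableOn_Ioc_of_le zero_le_one).mp hF
  have h2 := (h1.mono_set Set.Ioo_subset_Ioc_self).re
  refine (IntegrableOn.congr_fun h2 ?_ measurableSet_Ioo)
  intro x hx
  have hx0 : (0:ℝ) ≤ x := hx.1.le
  have hx1 : (0:ℝ) ≤ 1 - x := by linarith [hx.2.le]
  have : ((x:ℂ) ^ ((a:ℂ)-1) * (1 - (x:ℂ)) ^ ((b:ℂ)-1))
      = ((x ^ (a-1) * (1-x) ^ (b-1) : ℝ) : ℂ) := by
    push_cast
    rw [Complex.ofReal_cpow hx0, Complex.ofReal_cpow hx1]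
    push_cast
    ring
  simp [this]

lemma betaLower {a b : ℝ} (ha : 0 < a) (hb : 1 ≤ b) :
    Real.exp (-1) * b ^ (-a) / a ≤ Real.Gamma a * Real.Gamma b / Real.Gamma (a+b) := by
  have hb0 : 0 < b := lt_of_lt_of_le one_pos hb
  have hGpos : 0 < Real.Gamma (a+b) := Real.Gamma_pos_of_pos (by linarith)
  have hC : Real.Gamma a * Real.Gamma b / Real.Gamma (a+b)
      = ∫ x in Set.Ioo (0:ℝ) 1, x ^ (a-1) * (1-x) ^ (b-1) := by
    have hI := betaIdent ha hb0
    rw [intervalIntegral.integral_of_le zero_le_one, integral_Ioc_eq_integral_Ioo] at hI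
    rw [hI]
    field_simp
  set s : ℝ := 1/b with hs
  have hs0 : 0 < s := by positivity
  have hs1 : s ≤ 1 := by rw [hs]; rw [div_le_one hb0]; exact hb
  have hint : IntegrableOn (fun x : ℝ => x ^ (a-1) * (1-x) ^ (b-1)) (Set.Ioo 0 1) :=
    betaInteg ha hb0
  have hnn : 0 ≤ᵐ[volume.restrict (Set.Ioo (0:ℝ) 1)]
      (fun x : ℝ => x ^ (a-1) * (1-x) ^ (b-1)) := by
    filter_upwards [ae_restrict_mem measurableSet_Ioo] with x hx
    have h2 : (0:ℝ) ≤ 1 - x := by linarith [hx.2.le]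
    exact mul_nonneg (Real.rpow_nonneg hx.1.le _) (Real.rpow_nonneg h2 _)
  -- step 1: restrict to Ioo 0 s
  have step1 : ∫ x in Set.Ioo (0:ℝ) s, x ^ (a-1) * (1-x) ^ (b-1)
      ≤ ∫ x in Set.Ioo (0:ℝ) 1, x ^ (a-1) * (1-x) ^ (b-1) := by
    apply setIntegral_mono_set hint hnn
    exact HasSubset.Subset.eventuallyLE (Set.Ioo_subset_Ioo le_rfl hs1)
  -- step 2: lower bound on Ioo 0 s
  have step2 : (1-s) ^ (b-1) * (s ^ a / a)
      ≤ ∫ x in Set.Ioo (0:ℝ) s, x ^ (a-1) * (1-x) ^ (b-1) := by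
    rw [← rpow_int_Ioo ha hs0, ← integral_const_mul]
    apply setIntegral_mono_on
    · exact (intervalIntegrable_iff_integrableOn_Ioc_of_le hs0.le).mp
        ((intervalIntegral.intervalIntegrable_rpow' (by linarith)).const_mul _) |>.mono_set
        Set.Ioo_subset_Ioc_self
    · exact hint.mono_set (Set.Ioo_subset_Ioo le_rfl hs1)
    · exact measurableSet_Ioo
    · intro x hx
      have hx0 : (0:ℝ) < x := hx.1
      have h1s : (0:ℝ) ≤ 1 - s := by linarith
      have h1x : 1 - s ≤ 1 - x := by linarith [hx.2]
      have := Real.rpow_le_rpow h1s h1x (by linarith : (0:ℝ) ≤ b - 1)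
      have hxp : (0:ℝ) ≤ x ^ (a-1) := Real.rpow_nonneg hx0.le _
      calc (1-s) ^ (b-1) * x ^ (a-1) ≤ (1-x) ^ (b-1) * x ^ (a-1) :=
            mul_le_mul_of_nonneg_right this hxp
        _ = x ^ (a-1) * (1-x) ^ (b-1) := by ring
  -- step 3: (1-s)^(b-1) ≥ exp(-1), s^a = b^(-a)
  have hsa : s ^ a = b ^ (-a) := by
    rw [hs, one_div, ← Real.rpow_neg_one b, ← Real.rpow_mul hb0.le]
    norm_num
  have hes : Real.exp (-1) ≤ (1-s) ^ (b-1) := by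
    rcases eq_or_lt_of_le hb with h1 | h1
    · have : s = 1 := by rw [hs, ← h1]; norm_num
      rw [this, ← h1]
      norm_num
    · have hs1' : s < 1 := by rw [hs, div_lt_one hb0]; exact h1
      have hpos : 0 < 1 - s := by linarith
      rw [Real.rpow_def_of_pos hpos]
      rw [Real.exp_le_exp]
      have h2 : Real.log (1-s) = - Real.log ((1-s)⁻¹) := by rw [Real.log_inv]; ring
      have h3 : Real.log ((1-s)⁻¹) ≤ (1-s)⁻¹ - 1 := Real.log_le_sub_one_of_pos (by positivity)
      have h4 : (1-s)⁻¹ = b/(b-1) := by rw [hs]; field_simp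
      have hbne : b - 1 ≠ 0 := ne_of_gt (by linarith)
      have h5 : b/(b-1) - 1 = 1/(b-1) := by
        rw [eq_div_iff hbne, sub_mul, div_mul_cancel₀ _ hbne]; ring
      rw [h4, h5] at h3
      have hlog : -(1/(b-1)) ≤ Real.log (1-s) := by
        rw [h2, h4]; linarith
      have h6 := mul_le_mul_of_nonneg_right hlog (by linarith : (0:ℝ) ≤ b - 1)
      have h7 : -(1/(b-1)) * (b-1) = -1 := by field_simp
      linarith
  have hfinal : Real.exp (-1) * b ^ (-a) / a ≤ (1-s) ^ (b-1) * (s ^ a / a) := by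
    rw [hsa]
    have h0 : 0 ≤ b ^ (-a) / a := by positivity
    calc Real.exp (-1) * b ^ (-a) / a = Real.exp (-1) * (b ^ (-a) / a) := by ring
      _ ≤ (1-s) ^ (b-1) * (b ^ (-a) / a) := mul_le_mul_of_nonneg_right hes h0
  rw [hC]
  linarith

lemma betaTail {a b t : ℝ} (ha : 0 < a) (hb : 1 ≤ b) (ht0 : 0 < t) (ht1 : t < 1) :
    _root_.betaMeasure a b (Set.Ioi t) ≤
      ENNReal.ofReal (Real.exp 1 * b ^ a * Real.exp (-((b-1)*t))) := by
  have hb0 : 0 < b := by linarith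
  set C := Real.Gamma a * Real.Gamma b / Real.Gamma (a+b) with hCdef
  have hCpos : 0 < C :=
    div_pos (mul_pos (Real.Gamma_pos_of_pos ha) (Real.Gamma_pos_of_pos hb0))
      (Real.Gamma_pos_of_pos (by linarith))
  have hset : Set.Ioo (0:ℝ) 1 ∩ Set.Ioi t = Set.Ioo t 1 := by
    ext x
    simp only [Set.mem_inter_iff, Set.mem_Ioo, Set.mem_Ioi]
    constructor
    · rintro ⟨⟨_, h2⟩, h3⟩; exact ⟨h3, h2⟩
    · rintro ⟨h1, h2⟩; exact ⟨⟨lt_trans ht0 h1, h2⟩, h1⟩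
  have hA : _root_.betaMeasure a b (Set.Ioi t)
      = ∫⁻ x in Set.Ioo t 1, ENNReal.ofReal (x ^ (a-1) * (1-x) ^ (b-1) / C) := by
    rw [_root_.betaMeasure, withDensity_apply _ measurableSet_Ioi,
      lintegral_indicator measurableSet_Ioo _,
      Measure.restrict_restrict measurableSet_Ioo, hset]
  have hIoo : ∫⁻ x in Set.Ioo (0:ℝ) 1, ENNReal.ofReal (x ^ (a-1))
      = ENNReal.ofReal (1/a) := by
    rw [← ofReal_integral_eq_lintegral_ofReal]
    · rw [rpow_int_Ioo ha one_pos, Real.one_rpow]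
    · exact ((intervalIntegrable_iff_integrableOn_Ioc_of_le zero_le_one).mp
        (intervalIntegral.intervalIntegrable_rpow' (by linarith))).mono_set Set.Ioo_subset_Ioc_self
    · filter_upwards [ae_restrict_mem measurableSet_Ioo] with x hx
      exact Real.rpow_nonneg hx.1.le _
  have hconst : (0:ℝ) ≤ (1-t) ^ (b-1) / C :=
    div_nonneg (Real.rpow_nonneg (by linarith) _) hCpos.le
  have hB : _root_.betaMeasure a b (Set.Ioi t)
      ≤ ENNReal.ofReal ((1-t) ^ (b-1) / C * (1/a)) := by
    rw [hA]
    calc ∫⁻ x in Set.Ioo t 1, ENNReal.ofReal (x ^ (a-1) * (1-x) ^ (b-1) / C)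
        ≤ ∫⁻ x in Set.Ioo t 1, ENNReal.ofReal ((1-t) ^ (b-1) / C * x ^ (a-1)) := by
          apply lintegral_mono_ae
          filter_upwards [ae_restrict_mem measurableSet_Ioo] with x hx
          apply ENNReal.ofReal_le_ofReal
          have h1 : (1-x) ^ (b-1) ≤ (1-t) ^ (b-1) :=
            Real.rpow_le_rpow (by linarith [hx.2] : (0:ℝ) ≤ 1-x)
              (by linarith [hx.1] : 1-x ≤ 1-t) (by linarith : (0:ℝ) ≤ b-1)
          have hxp : (0:ℝ) ≤ x ^ (a-1) := Real.rpow_nonneg (le_of_lt (lt_trans ht0 hx.1)) _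
          have h2 : x ^ (a-1) * (1-x) ^ (b-1) ≤ x ^ (a-1) * (1-t) ^ (b-1) :=
            mul_le_mul_of_nonneg_left h1 hxp
          calc x ^ (a-1) * (1-x) ^ (b-1) / C ≤ x ^ (a-1) * (1-t) ^ (b-1) / C := by gcongr
            _ = (1-t) ^ (b-1) / C * x ^ (a-1) := by ring
      _ = ENNReal.ofReal ((1-t) ^ (b-1) / C) * ∫⁻ x in Set.Ioo t 1, ENNReal.ofReal (x ^ (a-1)) := by
          simp_rw [ENNReal.ofReal_mul hconst]
          rw [lintegral_const_mul' _ _ ENNReal.ofReal_ne_top]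
      _ ≤ ENNReal.ofReal ((1-t) ^ (b-1) / C) * ∫⁻ x in Set.Ioo (0:ℝ) 1, ENNReal.ofReal (x ^ (a-1)) := by
          apply mul_le_mul_right
          exact lintegral_mono' (Measure.restrict_mono (Set.Ioo_subset_Ioo ht0.le le_rfl) le_rfl) le_rfl
      _ = ENNReal.ofReal ((1-t) ^ (b-1) / C * (1/a)) := by
          rw [hIoo, ← ENNReal.ofReal_mul hconst]
  refine le_trans hB (ENNReal.ofReal_le_ofReal ?_)
  have r1 : (1-t) ^ (b-1) ≤ Real.exp (-((b-1)*t)) := by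
    have h1 : 1 - t ≤ Real.exp (-t) := by linarith [Real.add_one_le_exp (-t)]
    calc (1-t) ^ (b-1) ≤ (Real.exp (-t)) ^ (b-1) :=
          Real.rpow_le_rpow (by linarith) h1 (by linarith)
      _ = Real.exp (-((b-1)*t)) := by rw [← Real.exp_mul]; ring_nf
  have r2 : 1/(C*a) ≤ Real.exp 1 * b ^ a := by
    have hD : 0 < Real.exp (-1) * b ^ (-a) := by positivity
    have hle : Real.exp (-1) * b ^ (-a) ≤ C * a := by
      have := mul_le_mul_of_nonneg_right (betaLower ha hb) ha.le
      calc Real.exp (-1) * b ^ (-a) = Real.exp (-1) * b ^ (-a) / a * a := by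
            field_simp
        _ ≤ C * a := this
    calc 1/(C*a) ≤ 1/(Real.exp (-1) * b ^ (-a)) := one_div_le_one_div_of_le hD hle
      _ = Real.exp 1 * b ^ a := by
          rw [one_div, mul_inv, ← Real.exp_neg, ← Real.rpow_neg hb0.le]
          ring_nf
  have hnn1 : (0:ℝ) ≤ (1-t) ^ (b-1) := Real.rpow_nonneg (by linarith) _
  have hCne : C ≠ 0 := hCpos.ne'
  have hane : a ≠ 0 := ha.ne'
  calc (1-t) ^ (b-1) / C * (1/a) = (1-t) ^ (b-1) * (1/(C*a)) := by
        field_simp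
    _ ≤ Real.exp (-((b-1)*t)) * (Real.exp 1 * b ^ a) := by
        apply mul_le_mul r1 r2 (by positivity) (Real.exp_nonneg _)
    _ = Real.exp 1 * b ^ a * Real.exp (-((b-1)*t)) := by ring

set_option maxHeartbeats 1000000 in
theorem intensity_coupling_bound {Ω : Type*} [MeasurableSpace Ω]
    (P : Measure Ω) [IsProbabilityMeasure P]
    (m : ℕ) (hm : 1 ≤ m) (δ : ℝ) (hδ : -(m : ℝ) < δ)
    (ψ : ℕ → Ω → ℝ) (hmeas : ∀ k, Measurable (ψ k))
    (hindep : ProbabilityTheory.iIndepFun (fun k : ℕ => ψ (k + 2)) P)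
    (hdist : ∀ k : ℕ, 2 ≤ k →
      Measure.map (ψ k) P =
        _root_.betaMeasure ((m : ℝ) + δ) ((m : ℝ) * (2 * (k : ℝ) - 3) + ((k : ℝ) - 1) * δ)) :
    ∀ ε : ℝ, 0 < ε → ∃ K : ℕ, 2 ≤ K ∧
      ENNReal.ofReal (1 - ε) ≤
        P {a | ∀ k : ℕ, K ≤ k →
          ψ k a ≤ (Real.log k) ^ 2 / ((2 * (m : ℝ) + δ) * k)} := by
  intro ε hε
  set c : ℝ := 2 * (m : ℝ) + δ with hc
  set A : ℝ := (m : ℝ) + δ with hA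
  have hm1 : (1:ℝ) ≤ (m:ℝ) := by exact_mod_cast hm
  have hA0 : 0 < A := by rw [hA]; linarith
  have hc1 : 1 < c := by rw [hc]; linarith
  have hc0 : 0 < c := by linarith
  set X : ℝ := 1 + A * Real.log c with hX
  set L₀ : ℝ := 2*(A+2) + 2*|X| + 1 with hL₀
  -- eventual conditions
  have hlogtop : Filter.Tendsto (fun k : ℕ => Real.log k) Filter.atTop Filter.atTop :=
    Real.tendsto_log_atTop.comp tendsto_natCast_atTop_atTop
  have e1 : ∀ᶠ k : ℕ in Filter.atTop, max 1 L₀ ≤ Real.log k :=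
    hlogtop.eventually_ge_atTop _
  have e2 : ∀ᶠ k : ℕ in Filter.atTop, 2*(c+(m:ℝ)+1)+2 ≤ (k:ℝ) :=
    tendsto_natCast_atTop_atTop.eventually_ge_atTop _
  have e3 : ∀ᶠ k : ℕ in Filter.atTop, (Real.log k)^2 < (k:ℝ) := by
    have h0 := (Real.tendsto_pow_log_div_mul_add_atTop 1 0 2 one_ne_zero).comp
      (tendsto_natCast_atTop_atTop (R := ℝ))
    filter_upwards [h0.eventually (eventually_lt_nhds zero_lt_one),
      Filter.eventually_ge_atTop 1] with k hk hk1
    have hk0 : (0:ℝ) < (k:ℝ) := by exact_mod_cast hk1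
    simp only [Function.comp] at hk
    rw [div_lt_one (by linarith)] at hk
    linarith
  have e4 : ∀ᶠ k : ℕ in Filter.atTop, 2 ≤ k := Filter.eventually_ge_atTop 2
  have hev := e1.and (e2.and (e3.and e4))
  -- tail of the series
  set f : ℕ → ℝ := fun k => 1/(k:ℝ)^2 with hf
  have hfsum : Summable f := summable_one_div_nat_pow.mpr one_lt_two
  have etail : ∀ᶠ K : ℕ in Filter.atTop, ∑' j : ℕ, f (j + K) ≤ ε :=
    (tendsto_sum_nat_add f).eventually (eventually_le_nhds hε)
  obtain ⟨N, hN⟩ := Filter.eventually_atTop.mp hev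
  obtain ⟨M, hM⟩ := Filter.eventually_atTop.mp etail
  set K := max N M with hKdef
  have hcond := fun (k : ℕ) (hk : K ≤ k) => hN k (le_trans (le_max_left N M) hk)
  have htail : ∑' j : ℕ, f (j + K) ≤ ε := hM K (le_max_right N M)
  have hK2 : 2 ≤ K := (hcond K le_rfl).2.2.2
  -- per-k bound
  have key : ∀ k : ℕ, K ≤ k →
      P (ψ k ⁻¹' Set.Ioi ((Real.log k)^2 / (c * k))) ≤ ENNReal.ofReal (f k) := by
    intro k hk
    obtain ⟨hL1L0, hkbig, hL2k, hk2⟩ := hcond k hk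
    set L := Real.log k with hL
    have hL1 : 1 ≤ L := le_trans (le_max_left _ _) hL1L0
    have hLL0 : L₀ ≤ L := le_trans (le_max_right _ _) hL1L0
    have hk0 : (0:ℝ) < (k:ℝ) := by exact_mod_cast Nat.lt_of_lt_of_le two_pos hk2
    have hck : (0:ℝ) < c * k := mul_pos hc0 hk0
    have hkck : (k:ℝ) ≤ c * k := by nlinarith
    set t : ℝ := L^2 / (c * k) with htdef
    have ht0 : 0 < t := div_pos (by nlinarith) hck
    have ht1 : t < 1 := by rw [htdef, div_lt_one hck]; nlinarith
    set b : ℝ := c * k - (c + m) with hbdef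
    have hbeq : (m:ℝ) * (2 * (k:ℝ) - 3) + ((k:ℝ) - 1) * δ = b := by
      rw [hbdef, hc]; push_cast; ring
    have hb1 : 1 ≤ b := by rw [hbdef]; nlinarith
    have hmap : P (ψ k ⁻¹' Set.Ioi t) = _root_.betaMeasure A b (Set.Ioi t) := by
      rw [← Measure.map_apply (hmeas k) measurableSet_Ioi, hdist k hk2, hbeq]
    rw [hmap]
    refine le_trans (betaTail hA0 hb1 ht0 ht1) (ENNReal.ofReal_le_ofReal ?_)
    -- real inequality: e * b^A * exp(-((b-1)t)) ≤ 1/k^2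
    have hbA : b ^ A ≤ (c*k) ^ A :=
      Real.rpow_le_rpow (by linarith) (by rw [hbdef]; linarith) hA0.le
    have hbt : L^2/2 ≤ (b-1)*t := by
      have h1 : c*k/2 ≤ b - 1 := by rw [hbdef]; nlinarith
      have h2 : c*k/2 * t ≤ (b-1) * t := mul_le_mul_of_nonneg_right h1 ht0.le
      have h3 : c*k/2 * t = L^2/2 := by rw [htdef]; field_simp
      linarith
    have hexp : Real.exp (-((b-1)*t)) ≤ Real.exp (-(L^2/2)) :=
      Real.exp_le_exp.mpr (by linarith)
    have step : Real.exp 1 * b ^ A * Real.exp (-((b-1)*t))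
        ≤ Real.exp 1 * (c*k) ^ A * Real.exp (-(L^2/2)) := by
      apply mul_le_mul ?_ hexp (Real.exp_nonneg _) (by positivity)
      exact mul_le_mul_of_nonneg_left hbA (Real.exp_nonneg 1)
    refine le_trans step ?_
    have heq : Real.exp 1 * (c*k) ^ A * Real.exp (-(L^2/2))
        = Real.exp (1 + A * (Real.log c + L) - L^2/2) := by
      rw [Real.rpow_def_of_pos hck, Real.log_mul hc0.ne' hk0.ne', ← hL,
        ← Real.exp_add, ← Real.exp_add]
      ring_nf
    have hfk : f k = Real.exp (-(2*L)) := by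
      have hek : Real.exp L = (k:ℝ) := Real.exp_log hk0
      rw [hf]
      simp only []
      rw [show -(2*L) = -(L + L) by ring, Real.exp_neg, Real.exp_add, hek]
      rw [one_div]
      congr 1
      ring
    rw [heq, hfk, Real.exp_le_exp]
    have habs : 1 + A * Real.log c ≤ |X| := by rw [hX] at *; exact le_abs_self X
    have habs0 : 0 ≤ |X| := abs_nonneg X
    have hmul : (2*(A+2) + 2*|X| + 1) * L ≤ L^2 := by
      have h6 := mul_le_mul_of_nonneg_right hLL0 (by linarith : (0:ℝ) ≤ L)
      rw [hL₀] at h6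
      nlinarith [h6]
    have h7 : 0 ≤ |X| * L - |X| := by nlinarith [mul_le_mul_of_nonneg_left hL1 habs0]
    have hAL : 0 ≤ A * L := mul_nonneg hA0.le (by linarith)
    clear_value X L A
    linarith [hmul, habs, h7, hL1]
  -- assemble
  set T : Set Ω := {a | ∀ k : ℕ, K ≤ k →
      ψ k a ≤ (Real.log k) ^ 2 / ((2 * (m : ℝ) + δ) * k)} with hT
  have hTc : ∀ k : ℕ, (Real.log k) ^ 2 / ((2 * (m : ℝ) + δ) * k)
      = (Real.log k)^2 / (c * k) := by intro k; rw [hc]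
  have hTm : MeasurableSet T := by
    have : T = ⋂ k : ℕ, ⋂ (_ : K ≤ k),
        ψ k ⁻¹' Set.Iic ((Real.log k) ^ 2 / ((2 * (m : ℝ) + δ) * k)) := by
      ext ω; simp [hT, Set.mem_iInter]
    rw [this]
    exact MeasurableSet.iInter fun k => MeasurableSet.iInter fun _ =>
      (hmeas k) measurableSet_Iic
  have hcompl : Tᶜ ⊆ ⋃ j : ℕ,
      ψ (j + K) ⁻¹' Set.Ioi ((Real.log (j + K : ℕ))^2 / (c * (j + K : ℕ))) := by
    intro ω hω
    simp only [hT, Set.mem_compl_iff, Set.mem_setOf_eq, not_forall] at hω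
    obtain ⟨k, hk, hgt⟩ := hω
    refine Set.mem_iUnion.mpr ⟨k - K, ?_⟩
    simp only [Set.mem_preimage, Set.mem_Ioi, Nat.sub_add_cancel hk]
    rw [← hTc k]
    exact lt_of_not_ge hgt
  have hPc : P Tᶜ ≤ ENNReal.ofReal ε := by
    calc P Tᶜ ≤ P (⋃ j : ℕ,
          ψ (j + K) ⁻¹' Set.Ioi ((Real.log (j + K : ℕ))^2 / (c * (j + K : ℕ)))) :=
        measure_mono hcompl
      _ ≤ ∑' j : ℕ, P (ψ (j + K) ⁻¹'
            Set.Ioi ((Real.log (j + K : ℕ))^2 / (c * (j + K : ℕ)))) :=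
        measure_iUnion_le _
      _ ≤ ∑' j : ℕ, ENNReal.ofReal (f (j + K)) :=
        ENNReal.tsum_le_tsum fun j => key (j + K) (Nat.le_add_left K j)
      _ = ENNReal.ofReal (∑' j : ℕ, f (j + K)) :=
        (ENNReal.ofReal_tsum_of_nonneg (fun j => by positivity)
          ((summable_nat_add_iff K).mpr hfsum)).symm
      _ ≤ ENNReal.ofReal ε := ENNReal.ofReal_le_ofReal htail
  refine ⟨K, hK2, ?_⟩
  have h1 : P T = 1 - P Tᶜ := by
    have h2 := prob_compl_eq_one_sub (μ := P) hTm.compl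
    rwa [compl_compl] at h2
  calc ENNReal.ofReal (1 - ε) = 1 - ENNReal.ofReal ε := by
        rw [ENNReal.ofReal_sub _ hε.le, ENNReal.ofReal_one]
    _ ≤ 1 - P Tᶜ := tsub_le_tsub_left hPc 1
    _ = P T := h1.symm
end
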